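/- Convexity of the polygon of extremal points (Lemma 3): let S ⊆ ℤ be finite and nonempty, c : S → ℝ, P = convexHull{(c(l), l) : l ∈ S} + {(t, 0) : t ≥ 0} ⊆ ℝ², y : ℤ → ℝ, Y = {(−y(l), l) : l ∈ ℤ}, and for i ∈ ℤ let a_i be the minimal real such that P_i := P + (a_i, i) lies above Y. Assume that for every i ∈ ℤ the set P_i ∩ Y contains at least two points. Let Λ = {l ∈ ℤ : (−y(l), l) ∈ P_i for some i ∈ ℤ} be the set of second coordinates of all extremal points. Then the function l ↦ −y(l) is convex on Λ: for all l_1 < l_2 < l_3 in Λ one has (l_3 − l_1)·(−y(l_2)) ≤ (l_3 − l_2)·(−y(l_1)) + (l_2 − l_1)·(−y(l_3)). -/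

import Mathlib

open Pointwise

/-- The extended Newton polygon: convex hull of the points `(c l, l)`, `l ∈ S`,
plus the ray `{(t, 0) : t ≥ 0}`. -/
def NewtonPolygon (S : Finset ℤ) (c : ℤ → ℝ) : Set (ℝ × ℝ) :=
  convexHull ℝ {p | ∃ l ∈ S, p = (c l, (l : ℝ))} + {q | ∃ t : ℝ, 0 ≤ t ∧ q = (t, 0)}

/-- The translate `P + (a, i)` of a subset of `ℝ²`. -/
def shiftSet (P : Set (ℝ × ℝ)) (a : ℝ) (i : ℤ) : Set (ℝ × ℝ) :=
  (fun p => (p.1 + a, p.2 + (i : ℝ))) '' P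

/-- `U` lies above `Y = {(-y l, l) : l ∈ ℤ}` if every point `(v, l) ∈ U` with
integer second coordinate `l` satisfies `v ≥ -y l`. -/
def LiesAbove (y : ℤ → ℝ) (U : Set (ℝ × ℝ)) : Prop :=
  ∀ (v : ℝ) (l : ℤ), (v, (l : ℝ)) ∈ U → -y l ≤ v

/-- The set `Y = {(-y l, l) : l ∈ ℤ} ⊆ ℝ²`. -/
def YSet (y : ℤ → ℝ) : Set (ℝ × ℝ) := {p | ∃ l : ℤ, p = (-y l, (l : ℝ))}

/-- `a` is the minimal real such that `P + (a, i)` lies above `Y`. -/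
def IsMinimalLift (y : ℤ → ℝ) (P : Set (ℝ × ℝ)) (i : ℤ) (a : ℝ) : Prop :=
  LiesAbove y (shiftSet P a i) ∧ ∀ a' < a, ¬ LiesAbove y (shiftSet P a' i)

lemma NP_convex (S : Finset ℤ) (c : ℤ → ℝ) : Convex ℝ (NewtonPolygon S c) := by
  apply Convex.add (convex_convexHull ℝ _)
  intro p hp q hq α β hα hβ hαβ
  obtain ⟨s, hs, rfl⟩ := hp
  obtain ⟨t, ht, rfl⟩ := hq
  refine ⟨α * s + β * t, by positivity, ?_⟩
  simp [Prod.ext_iff]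

lemma NP_slab (S : Finset ℤ) (hS : S.Nonempty) (c : ℤ → ℝ) :
    ∀ p ∈ NewtonPolygon S c,
      ((S.min' hS : ℝ)) ≤ p.2 ∧ p.2 ≤ (S.max' hS : ℝ) := by
  intro p hp
  obtain ⟨u, hu, r, hr, rfl⟩ := hp
  obtain ⟨t, ht, rfl⟩ := hr
  have hsub : {p : ℝ × ℝ | ∃ l ∈ S, p = (c l, (l : ℝ))} ⊆
      {q : ℝ × ℝ | ((S.min' hS : ℝ)) ≤ q.2 ∧ q.2 ≤ (S.max' hS : ℝ)} := by
    rintro q ⟨l, hl, rfl⟩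
    constructor
    · exact_mod_cast Int.cast_le.mpr (S.min'_le l hl)
    · exact_mod_cast Int.cast_le.mpr (S.le_max' l hl)
  have hconv : Convex ℝ {q : ℝ × ℝ | ((S.min' hS : ℝ)) ≤ q.2 ∧ q.2 ≤ (S.max' hS : ℝ)} := by
    intro x hx z hz α β hα hβ hαβ
    constructor
    · have : α * (S.min' hS : ℝ) + β * (S.min' hS : ℝ) = (S.min' hS : ℝ) := by
        rw [← add_mul, hαβ, one_mul]
      calc ((S.min' hS : ℝ)) = α * (S.min' hS : ℝ) + β * (S.min' hS : ℝ) := this.symm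
        _ ≤ α * x.2 + β * z.2 := by
            apply add_le_add (mul_le_mul_of_nonneg_left hx.1 hα) (mul_le_mul_of_nonneg_left hz.1 hβ)
        _ = (α • x + β • z).2 := by simp [smul_eq_mul]
    · have : α * (S.max' hS : ℝ) + β * (S.max' hS : ℝ) = (S.max' hS : ℝ) := by
        rw [← add_mul, hαβ, one_mul]
      calc (α • x + β • z).2 = α * x.2 + β * z.2 := by simp [smul_eq_mul]
        _ ≤ α * (S.max' hS : ℝ) + β * (S.max' hS : ℝ) := by
            apply add_le_add (mul_le_mul_of_nonneg_left hx.2 hα) (mul_le_mul_of_nonneg_left hz.2 hβ)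
        _ = (S.max' hS : ℝ) := this
  have := convexHull_min hsub hconv hu
  simpa using this

lemma mem_shift_iff {P : Set (ℝ × ℝ)} {b : ℝ} {i : ℤ} {x : ℝ} {l : ℝ} :
    ((x, l) ∈ shiftSet P b i) ↔ (x - b, l - (i : ℝ)) ∈ P := by
  constructor
  · rintro ⟨p, hp, he⟩
    have h1 : p.1 + b = x := congrArg Prod.fst he
    have h2 : p.2 + (i : ℝ) = l := congrArg Prod.snd he
    have : p = (x - b, l - (i : ℝ)) := by
      rw [Prod.ext_iff]; constructor <;> simp <;> linarith
    rwa [← this]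
  · intro h
    exact ⟨(x - b, l - (i : ℝ)), h, by simp⟩

lemma lemT (S : Finset ℤ) (c : ℤ → ℝ) (y : ℤ → ℝ) (a : ℤ → ℝ)
    (ha : ∀ i : ℤ, IsMinimalLift y (NewtonPolygon S c) i (a i))
    {u v i j : ℤ} (huv : u < v) (hji : j ≤ i)
    (hu : (-y u, (u : ℝ)) ∈ shiftSet (NewtonPolygon S c) (a i) i)
    (hv : (-y v, (v : ℝ)) ∈ shiftSet (NewtonPolygon S c) (a j) j) :
    (-y v, (v : ℝ)) ∈ shiftSet (NewtonPolygon S c) (a i) i ∧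
    (-y u, (u : ℝ)) ∈ shiftSet (NewtonPolygon S c) (a j) j := by
  rw [mem_shift_iff] at hu hv ⊢
  rw [mem_shift_iff]
  set p : ℝ × ℝ := (-y u - a i, (u : ℝ) - i) with hpdef
  set q : ℝ × ℝ := (-y v - a j, (v : ℝ) - j) with hqdef
  have huv' : (u : ℝ) < v := by exact_mod_cast huv
  have hji' : (j : ℝ) ≤ i := by exact_mod_cast hji
  set d : ℝ := ((v : ℝ) - u) + ((i : ℝ) - j) with hd
  have hdpos : 0 < d := by rw [hd]; linarith
  set α : ℝ := ((i : ℝ) - j) / d with hα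
  set β : ℝ := ((v : ℝ) - u) / d with hβ
  have hα0 : 0 ≤ α := div_nonneg (by linarith) hdpos.le
  have hβ0 : 0 ≤ β := div_nonneg (by linarith) hdpos.le
  have hαβ : α + β = 1 := by
    rw [hα, hβ, ← add_div]
    rw [show (i : ℝ) - j + ((v : ℝ) - u) = d by rw [hd]; ring]
    exact div_self hdpos.ne'
  have hconv := NP_convex S c
  have hr : α • p + β • q ∈ NewtonPolygon S c := hconv hu hv hα0 hβ0 hαβ
  have hs : β • p + α • q ∈ NewtonPolygon S c := hconv hu hv hβ0 hα0 (by linarith)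
  have hr2 : (α • p + β • q).2 = (v : ℝ) - i := by
    simp only [Prod.snd_add, Prod.smul_snd, smul_eq_mul, hpdef, hqdef]
    rw [hα, hβ]
    field_simp
    ring
  have hs2 : (β • p + α • q).2 = (u : ℝ) - j := by
    simp only [Prod.snd_add, Prod.smul_snd, smul_eq_mul, hpdef, hqdef]
    rw [hα, hβ]
    field_simp
    ring
  have hIr : -y v ≤ (α • p + β • q).1 + a i := by
    apply (ha i).1 _ v
    refine ⟨α • p + β • q, hr, ?_⟩
    rw [Prod.ext_iff]
    refine ⟨rfl, by simp [hr2]⟩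
  have hIs : -y u ≤ (β • p + α • q).1 + a j := by
    apply (ha j).1 _ u
    refine ⟨β • p + α • q, hs, ?_⟩
    rw [Prod.ext_iff]
    refine ⟨rfl, by simp [hs2]⟩
  have hsum : (α • p + β • q).1 + (β • p + α • q).1 = p.1 + q.1 := by
    simp only [Prod.fst_add, Prod.smul_fst, smul_eq_mul]
    linear_combination (p.1 + q.1) * hαβ
  have hp1 : p.1 = -y u - a i := rfl
  have hq1 : q.1 = -y v - a j := rfl
  have e1 : (α • p + β • q).1 = -y v - a i := by
    rw [hp1, hq1] at hsum; linarith
  have e2 : (β • p + α • q).1 = -y u - a j := by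
    rw [hp1, hq1] at hsum; linarith
  constructor
  · have : α • p + β • q = (-y v - a i, (v : ℝ) - i) := by
      rw [Prod.ext_iff]; exact ⟨e1, hr2⟩
    rwa [← this]
  · have : β • p + α • q = (-y u - a j, (u : ℝ) - j) := by
      rw [Prod.ext_iff]; exact ⟨e2, hs2⟩
    rwa [← this]

lemma lemM (S : Finset ℤ) (c : ℤ → ℝ) (y : ℤ → ℝ) (a : ℤ → ℝ)
    (ha : ∀ i : ℤ, IsMinimalLift y (NewtonPolygon S c) i (a i))
    {l₁ l₂ l₃ k d : ℤ} (h12 : l₁ < l₂) (h23 : l₂ < l₃)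
    (hd0 : 0 ≤ d) (hd1 : d ≤ l₂ - l₁) (hd2 : d ≤ l₃ - l₂)
    (h1 : (-y l₁, (l₁ : ℝ)) ∈ shiftSet (NewtonPolygon S c) (a k) k)
    (h3 : (-y l₃, (l₃ : ℝ)) ∈ shiftSet (NewtonPolygon S c) (a (k + d)) (k + d)) :
    ((l₃ - l₁ : ℤ) : ℝ) * (-y l₂) ≤
      ((l₃ - l₂ : ℤ) : ℝ) * (-y l₁) + ((l₂ - l₁ : ℤ) : ℝ) * (-y l₃) := by
  rw [mem_shift_iff] at h1 h3
  set p : ℝ × ℝ := (-y l₁ - a k, (l₁ : ℝ) - k) with hpdef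
  set q : ℝ × ℝ := (-y l₃ - a (k + d), (l₃ : ℝ) - ((k + d : ℤ) : ℝ)) with hqdef
  have h12' : (l₁ : ℝ) < l₂ := by exact_mod_cast h12
  have h23' : (l₂ : ℝ) < l₃ := by exact_mod_cast h23
  have hd0' : (0 : ℝ) ≤ d := by exact_mod_cast hd0
  have hd1' : (d : ℝ) ≤ (l₂ : ℝ) - l₁ := by exact_mod_cast hd1
  have hd2' : (d : ℝ) ≤ (l₃ : ℝ) - l₂ := by exact_mod_cast hd2
  have hq2 : q.2 = (l₃ : ℝ) - k - d := by rw [hqdef]; push_cast; ring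
  set D : ℝ := (l₃ : ℝ) - l₁ - d with hD
  have hDpos : 0 < D := by rw [hD]; linarith
  set μ : ℝ := ((l₃ : ℝ) - d - l₂) / D with hμ
  set μ' : ℝ := ((l₂ : ℝ) - l₁) / D with hμ'
  set ν : ℝ := ((l₃ : ℝ) - l₂) / D with hν
  set ν' : ℝ := ((l₂ : ℝ) - l₁ - d) / D with hν'
  have hμ0 : 0 ≤ μ := div_nonneg (by linarith) hDpos.le
  have hμ'0 : 0 ≤ μ' := div_nonneg (by linarith) hDpos.le
  have hν0 : 0 ≤ ν := div_nonneg (by linarith) hDpos.le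
  have hν'0 : 0 ≤ ν' := div_nonneg (by linarith) hDpos.le
  have hμμ' : μ + μ' = 1 := by
    rw [hμ, hμ', ← add_div,
      show (l₃ : ℝ) - d - l₂ + ((l₂ : ℝ) - l₁) = D by rw [hD]; ring]
    exact div_self hDpos.ne'
  have hνν' : ν + ν' = 1 := by
    rw [hν, hν', ← add_div,
      show (l₃ : ℝ) - l₂ + ((l₂ : ℝ) - l₁ - d) = D by rw [hD]; ring]
    exact div_self hDpos.ne'
  have hconv := NP_convex S c
  have hz₁ : μ • p + μ' • q ∈ NewtonPolygon S c := hconv h1 h3 hμ0 hμ'0 hμμ'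
  have hz₂ : ν • p + ν' • q ∈ NewtonPolygon S c := hconv h1 h3 hν0 hν'0 hνν'
  have hz₁2 : (μ • p + μ' • q).2 = (l₂ : ℝ) - k := by
    have hp2 : p.2 = (l₁ : ℝ) - k := rfl
    simp only [Prod.snd_add, Prod.smul_snd, smul_eq_mul, hp2, hq2]
    rw [hμ, hμ']
    field_simp
    ring
  have hz₂2 : (ν • p + ν' • q).2 = (l₂ : ℝ) - ((k + d : ℤ) : ℝ) := by
    have hp2 : p.2 = (l₁ : ℝ) - k := rfl
    simp only [Prod.snd_add, Prod.smul_snd, smul_eq_mul, hp2, hq2]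
    rw [hν, hν']
    push_cast
    field_simp
    ring
  have I1 : -y l₂ ≤ (μ • p + μ' • q).1 + a k := by
    apply (ha k).1 _ l₂
    rw [mem_shift_iff]
    have : ((μ • p + μ' • q).1 + a k - a k, (l₂ : ℝ) - (k : ℝ)) = μ • p + μ' • q := by
      rw [Prod.ext_iff]
      exact ⟨by ring, hz₁2.symm⟩
    rw [this]
    exact hz₁
  have I2 : -y l₂ ≤ (ν • p + ν' • q).1 + a (k + d) := by
    apply (ha (k + d)).1 _ l₂
    rw [mem_shift_iff]
    have : ((ν • p + ν' • q).1 + a (k + d) - a (k + d), (l₂ : ℝ) - ((k + d : ℤ) : ℝ))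
        = ν • p + ν' • q := by
      rw [Prod.ext_iff]
      exact ⟨by ring, hz₂2.symm⟩
    rw [this]
    exact hz₂
  have hz₁1 : (μ • p + μ' • q).1 = μ * (-y l₁ - a k) + μ' * (-y l₃ - a (k + d)) := by
    simp only [Prod.fst_add, Prod.smul_fst, smul_eq_mul, hpdef, hqdef]
  have hz₂1 : (ν • p + ν' • q).1 = ν * (-y l₁ - a k) + ν' * (-y l₃ - a (k + d)) := by
    simp only [Prod.fst_add, Prod.smul_fst, smul_eq_mul, hpdef, hqdef]
  rw [hz₁1] at I1
  rw [hz₂1] at I2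
  have K1 : D * (-y l₂) ≤ ((l₃ : ℝ) - d - l₂) * (-y l₁ - a k)
      + ((l₂ : ℝ) - l₁) * (-y l₃ - a (k + d)) + D * a k := by
    have h := mul_le_mul_of_nonneg_left I1 hDpos.le
    have e : D * (μ * (-y l₁ - a k) + μ' * (-y l₃ - a (k + d)) + a k)
        = ((l₃ : ℝ) - d - l₂) * (-y l₁ - a k) + ((l₂ : ℝ) - l₁) * (-y l₃ - a (k + d))
          + D * a k := by
      rw [hμ, hμ']
      field_simp
    rwa [e] at h
  have K2 : D * (-y l₂) ≤ ((l₃ : ℝ) - l₂) * (-y l₁ - a k)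
      + ((l₂ : ℝ) - l₁ - d) * (-y l₃ - a (k + d)) + D * a (k + d) := by
    have h := mul_le_mul_of_nonneg_left I2 hDpos.le
    have e : D * (ν * (-y l₁ - a k) + ν' * (-y l₃ - a (k + d)) + a (k + d))
        = ((l₃ : ℝ) - l₂) * (-y l₁ - a k) + ((l₂ : ℝ) - l₁ - d) * (-y l₃ - a (k + d))
          + D * a (k + d) := by
      rw [hν, hν']
      field_simp
    rwa [e] at h
  have L1 := mul_le_mul_of_nonneg_left K1 (by linarith : (0:ℝ) ≤ (l₃ : ℝ) - l₂)
  have L2 := mul_le_mul_of_nonneg_left K2 (by linarith : (0:ℝ) ≤ (l₂ : ℝ) - l₁)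
  have comb := add_le_add L1 L2
  have goal' : D * (((l₃ : ℝ) - l₁) * (-y l₂)) ≤
      D * (((l₃ : ℝ) - l₂) * (-y l₁) + ((l₂ : ℝ) - l₁) * (-y l₃)) := by
    have eL : ((l₃ : ℝ) - l₂) * (D * (-y l₂)) + ((l₂ : ℝ) - l₁) * (D * (-y l₂))
        = D * (((l₃ : ℝ) - l₁) * (-y l₂)) := by ring
    have eR : ((l₃ : ℝ) - l₂) * (((l₃ : ℝ) - d - l₂) * (-y l₁ - a k)
          + ((l₂ : ℝ) - l₁) * (-y l₃ - a (k + d)) + D * a k)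
        + ((l₂ : ℝ) - l₁) * (((l₃ : ℝ) - l₂) * (-y l₁ - a k)
          + ((l₂ : ℝ) - l₁ - d) * (-y l₃ - a (k + d)) + D * a (k + d))
        = D * (((l₃ : ℝ) - l₂) * (-y l₁) + ((l₂ : ℝ) - l₁) * (-y l₃)) := by
      rw [hD]; ring
    rw [← eL, ← eR]
    exact comb
  have final := (mul_le_mul_iff_right₀ hDpos).mp goal'
  push_cast
  linarith

/-- Convexity of the polygon of extremal points (Lemma 3): if every `P_i ∩ Y`
contains at least two points, then on the set `Λ` of second coordinates of
extremal points the function `l ↦ -y l` is convex. -/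
theorem extremal_polygon_convex
    (S : Finset ℤ) (hS : S.Nonempty) (c : ℤ → ℝ) (y : ℤ → ℝ) (a : ℤ → ℝ)
    (ha : ∀ i : ℤ, IsMinimalLift y (NewtonPolygon S c) i (a i))
    (htwo : ∀ i : ℤ, ∃ p ∈ shiftSet (NewtonPolygon S c) (a i) i ∩ YSet y,
      ∃ q ∈ shiftSet (NewtonPolygon S c) (a i) i ∩ YSet y, p ≠ q) :
    ∀ l₁ l₂ l₃ : ℤ,
      (∃ i : ℤ, (-y l₁, (l₁ : ℝ)) ∈ shiftSet (NewtonPolygon S c) (a i) i) →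
      (∃ i : ℤ, (-y l₂, (l₂ : ℝ)) ∈ shiftSet (NewtonPolygon S c) (a i) i) →
      (∃ i : ℤ, (-y l₃, (l₃ : ℝ)) ∈ shiftSet (NewtonPolygon S c) (a i) i) →
      l₁ < l₂ → l₂ < l₃ →
      ((l₃ - l₁ : ℤ) : ℝ) * (-y l₂) ≤
        ((l₃ - l₂ : ℤ) : ℝ) * (-y l₁) + ((l₂ - l₁ : ℤ) : ℝ) * (-y l₃) := by
  suffices H : ∀ n : ℕ, ∀ l₁ l₂ l₃ : ℤ,
      (l₃ - l₁).toNat ≤ n →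
      (∃ i : ℤ, (-y l₁, (l₁ : ℝ)) ∈ shiftSet (NewtonPolygon S c) (a i) i) →
      (∃ i : ℤ, (-y l₂, (l₂ : ℝ)) ∈ shiftSet (NewtonPolygon S c) (a i) i) →
      (∃ i : ℤ, (-y l₃, (l₃ : ℝ)) ∈ shiftSet (NewtonPolygon S c) (a i) i) →
      l₁ < l₂ → l₂ < l₃ →
      ((l₃ - l₁ : ℤ) : ℝ) * (-y l₂) ≤
        ((l₃ - l₂ : ℤ) : ℝ) * (-y l₁) + ((l₂ - l₁ : ℤ) : ℝ) * (-y l₃) by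
    intro l₁ l₂ l₃ h1 h2 h3 h12 h23
    exact H (l₃ - l₁).toNat l₁ l₂ l₃ le_rfl h1 h2 h3 h12 h23
  intro n
  induction n with
  | zero =>
      intro l₁ l₂ l₃ hn _ _ _ h12 h23
      omega
  | succ n IH =>
      intro l₁ l₂ l₃ hn h1 h2 h3 h12 h23
      by_cases hx : ∃ x : ℤ,
          (∃ i : ℤ, (-y x, (x : ℝ)) ∈ shiftSet (NewtonPolygon S c) (a i) i) ∧
          l₁ < x ∧ x < l₃ ∧ x ≠ l₂
      · obtain ⟨x, hxΛ, hx1, hx3, hxne⟩ := hx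
        rcases lt_or_gt_of_ne hxne with hlt | hgt
        · -- l₁ < x < l₂ < l₃
          have IH1 := IH l₁ x l₂ (by omega) h1 hxΛ h2 hx1 hlt
          have IH2 := IH x l₂ l₃ (by omega) hxΛ h2 h3 hlt h23
          push_cast at IH1 IH2 ⊢
          have h32 : (0:ℝ) ≤ (l₃ : ℝ) - l₂ := by
            have : (l₂ : ℝ) < l₃ := by exact_mod_cast h23
            linarith
          have h21 : (0:ℝ) ≤ (l₂ : ℝ) - l₁ := by
            have : (l₁ : ℝ) < l₂ := by exact_mod_cast h12
            linarith
          have hpos : (0:ℝ) < (l₂ : ℝ) - x := by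
            have : (x : ℝ) < l₂ := by exact_mod_cast hlt
            linarith
          have M1 := mul_le_mul_of_nonneg_left IH1 h32
          have M2 := mul_le_mul_of_nonneg_left IH2 h21
          have goal' : ((l₂:ℝ) - x) * (((l₃:ℝ) - l₁) * (-y l₂)) ≤
              ((l₂:ℝ) - x) * (((l₃:ℝ) - l₂) * (-y l₁) + ((l₂:ℝ) - l₁) * (-y l₃)) := by
            nlinarith [M1, M2]
          have := (mul_le_mul_iff_right₀ hpos).mp goal'
          linarith
        · -- l₁ < l₂ < x < l₃
          have IH1 := IH l₁ l₂ x (by omega) h1 h2 hxΛ h12 hgt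
          have IH2 := IH l₂ x l₃ (by omega) h2 hxΛ h3 hgt hx3
          push_cast at IH1 IH2 ⊢
          have h32 : (0:ℝ) ≤ (l₃ : ℝ) - l₂ := by
            have : (l₂ : ℝ) < l₃ := by exact_mod_cast h23
            linarith
          have h21 : (0:ℝ) ≤ (l₂ : ℝ) - l₁ := by
            have : (l₁ : ℝ) < l₂ := by exact_mod_cast h12
            linarith
          have hpos : (0:ℝ) < (x : ℝ) - l₂ := by
            have : (l₂ : ℝ) < x := by exact_mod_cast hgt
            linarith
          have M1 := mul_le_mul_of_nonneg_left IH1 h32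
          have M2 := mul_le_mul_of_nonneg_left IH2 h21
          have goal' : ((x:ℝ) - l₂) * (((l₃:ℝ) - l₁) * (-y l₂)) ≤
              ((x:ℝ) - l₂) * (((l₃:ℝ) - l₂) * (-y l₁) + ((l₂:ℝ) - l₁) * (-y l₃)) := by
            nlinarith [M1, M2]
          have := (mul_le_mul_iff_right₀ hpos).mp goal'
          linarith
      · push_neg at hx
        obtain ⟨i₁, h1'⟩ := h1
        obtain ⟨i₃, h3'⟩ := h3
        by_cases hc : ∃ k k' : ℤ,
            ((-y l₁, (l₁ : ℝ)) ∈ shiftSet (NewtonPolygon S c) (a k) k) ∧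
            ((-y l₃, (l₃ : ℝ)) ∈ shiftSet (NewtonPolygon S c) (a k') k') ∧ k' ≤ k
        · obtain ⟨k, k', hk, hk', hle⟩ := hc
          have hT := lemT S c y a ha (by omega : l₁ < l₃) hle hk hk'
          have := lemM S c y a ha (k := k) (d := 0) h12 h23 (by omega) (by omega) (by omega)
            hk (by rw [show k + (0:ℤ) = k from by ring]; exact hT.1)
          exact this
        · push_neg at hc
          have hFbd : ∃ b : ℤ, ∀ z : ℤ,
              ((-y l₁, (l₁:ℝ)) ∈ shiftSet (NewtonPolygon S c) (a z) z) → z ≤ b := by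
            refine ⟨l₁ - S.min' hS, ?_⟩
            intro z hz
            rw [mem_shift_iff] at hz
            have hsl : (S.min' hS : ℝ) ≤ (l₁ : ℝ) - (z : ℝ) := (NP_slab S hS c _ hz).1
            have : (S.min' hS : ℤ) ≤ l₁ - z := by exact_mod_cast hsl
            omega
          have hGbd : ∃ b : ℤ, ∀ z : ℤ,
              ((-y l₃, (l₃:ℝ)) ∈ shiftSet (NewtonPolygon S c) (a z) z) → b ≤ z := by
            refine ⟨l₃ - S.max' hS, ?_⟩
            intro z hz
            rw [mem_shift_iff] at hz
            have hsl : (l₃ : ℝ) - (z : ℝ) ≤ (S.max' hS : ℝ) := (NP_slab S hS c _ hz).2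
            have : l₃ - z ≤ (S.max' hS : ℤ) := by exact_mod_cast hsl
            omega
          obtain ⟨k₁, hk₁, hk₁max⟩ := Int.exists_greatest_of_bdd hFbd ⟨i₁, h1'⟩
          obtain ⟨k₃, hk₃, hk₃min⟩ := Int.exists_least_of_bdd hGbd ⟨i₃, h3'⟩
          have hlt13 : k₁ < k₃ := hc k₁ k₃ hk₁ hk₃
          by_cases heq : k₃ = k₁ + 1
          · have := lemM S c y a ha (k := k₁) (d := 1) h12 h23 (by omega) (by omega) (by omega)
              hk₁ (by rw [show k₁ + (1:ℤ) = k₃ from by omega]; exact hk₃)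
            exact this
          · exfalso
            obtain ⟨P1, hP1, P2, hP2, hPne⟩ := htwo (k₁ + 1)
            obtain ⟨x, hx1eq⟩ := hP1.2
            obtain ⟨x', hx2eq⟩ := hP2.2
            have hxA : (-y x, (x:ℝ)) ∈ shiftSet (NewtonPolygon S c) (a (k₁+1)) (k₁+1) := by
              rw [← hx1eq]; exact hP1.1
            have hx'A : (-y x', (x':ℝ)) ∈ shiftSet (NewtonPolygon S c) (a (k₁+1)) (k₁+1) := by
              rw [← hx2eq]; exact hP2.1
            have hxx' : x ≠ x' := by
              intro h
              apply hPne
              rw [hx1eq, hx2eq, h]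
            have key : ∀ z : ℤ,
                ((-y z, (z:ℝ)) ∈ shiftSet (NewtonPolygon S c) (a (k₁+1)) (k₁+1)) → z = l₂ := by
              intro z hz
              rcases lt_trichotomy z l₁ with hzlt | hzeq | hzgt
              · have hT := lemT S c y a ha hzlt (by omega : k₁ ≤ k₁ + 1) hz hk₁
                have := hk₁max (k₁+1) hT.1
                omega
              · exfalso
                rw [hzeq] at hz
                have := hk₁max (k₁+1) hz
                omega
              · rcases lt_trichotomy z l₃ with hzlt3 | hzeq3 | hzgt3
                · exact hx z ⟨k₁+1, hz⟩ hzgt hzlt3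
                · exfalso
                  rw [hzeq3] at hz
                  have := hk₃min (k₁+1) hz
                  omega
                · exfalso
                  have hT := lemT S c y a ha hzgt3 (by omega : k₁ + 1 ≤ k₃) hk₃ hz
                  have := hk₃min (k₁+1) hT.2
                  omega
            have e1 := key x hxA
            have e2 := key x' hx'A
            exact hxx' (by omega)
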